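/- Let Y be a two-level ±1 design that is an OA(N,k,2,t) with N = λ·2^t, λ odd, and k ≥ t + 3, and let r ≥ 1 with t + r ≤ k − 1. Suppose the column i ∈ Fin k minimizes Σ_{l ⊆ Fin k ∖ {i}, |l| = t+r} J(l)² over all columns, i.e., Σ_{l ⊆ Fin k ∖ {i}, |l| = t+r} J(l)² ≤ Σ_{l ⊆ Fin k ∖ {j'}, |l| = t+r} J(l)² for every column j'. Then, with S = Σ_{l ⊆ Fin k, |l| = t+r} J(l)², one has Σ_{l ⊆ Fin k ∖ {i}, |l| = t+r} J(l)² ≤ φ₂(t,t+r) · ⌊( ((k − t − r)/k)·S − φ₁(k−1,t,t+r) ) / φ₂(t,t+r)⌋ + φ₁(k−1,t,t+r), where the floor is taken of the rational number inside. -/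

import Mathlib

/-- All entries of `Y` are `1` or `-1`. -/
def isPM {N k : ℕ} (Y : Fin N → Fin k → ℤ) : Prop :=
  ∀ i j, Y i j = 1 ∨ Y i j = -1

/-- `Y` is a two-level orthogonal array OA(N,k,2,t): for every `t`-element set `T` of
columns and every `±1` sign pattern `ε`, the number of rows matching `ε` on `T`
equals `N / 2^t` (equivalently, the count times `2^t` equals `N`). -/
def isOA2 (N k t : ℕ) (Y : Fin N → Fin k → ℤ) : Prop :=
  ∀ T : Finset (Fin k), T.card = t →
    ∀ ε : Fin k → ℤ, (∀ j, ε j = 1 ∨ ε j = -1) →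
      (Finset.univ.filter (fun i : Fin N => ∀ j ∈ T, Y i j = ε j)).card * 2 ^ t = N

/-- The `J`-characteristic of the set of columns `l`. -/
def Jchar {N k : ℕ} (Y : Fin N → Fin k → ℤ) (l : Finset (Fin k)) : ℤ :=
  ∑ i : Fin N, ∏ j ∈ l, Y i j

/-- `I(t,j) = 1` if `C(j-1, j-t-1)` is odd and `0` otherwise. -/
def Ioa (t j : ℕ) : ℕ := if Odd ((j - 1).choose (j - t - 1)) then 1 else 0

/-- `φ₁(k,t,j) = I(t,j)·C(k,j)·2^{2t}`. -/
def phi1 (k t j : ℕ) : ℕ := Ioa t j * k.choose j * 2 ^ (2 * t)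

/-- `φ₂(t,j) = 2^{2t+2+I(t,j)}`. -/
def phi2 (t j : ℕ) : ℕ := 2 ^ (2 * t + 2 + Ioa t j)

lemma count_eq {N k t : ℕ} (Y : Fin N → Fin k → ℤ) (hpm : isPM Y)
    (hoa : isOA2 N k t Y) (htk : t ≤ k) :
    ∀ n (S : Finset (Fin k)), S.card + n = t → ∀ ε : Fin k → ℤ,
      (∀ j, ε j = 1 ∨ ε j = -1) →
      (Finset.univ.filter (fun i : Fin N => ∀ c ∈ S, Y i c = ε c)).card * 2 ^ S.card = N := by
  intro n
  induction n with
  | zero =>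
    intro S hS ε hε
    have h : S.card = t := by omega
    rw [h]; exact hoa S h ε hε
  | succ n ih =>
    intro S hS ε hε
    have hSlt : S.card < k := by
      have := Finset.card_le_univ S
      simp only [Finset.card_univ, Fintype.card_fin] at this
      omega
    have hex : ∃ c, c ∉ S := by
      by_contra h; push_neg at h
      have : S = Finset.univ := Finset.eq_univ_iff_forall.mpr h
      rw [this] at hSlt; simp at hSlt
    obtain ⟨c, hc⟩ := hex
    have key : ∀ v : ℤ,
        (Finset.univ.filter (fun i : Fin N => ∀ c' ∈ insert c S, Y i c' = Function.update ε c v c'))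
        = (Finset.univ.filter (fun i : Fin N => ∀ c' ∈ S, Y i c' = ε c')).filter
            (fun i => Y i c = v) := by
      intro v
      rw [Finset.filter_filter]
      apply Finset.filter_congr
      intro x _
      simp only [Finset.mem_insert]
      constructor
      · intro h
        refine ⟨fun c' hc' => ?_, ?_⟩
        · have := h c' (Or.inr hc')
          rwa [Function.update_of_ne (by rintro rfl; exact hc hc')] at this
        · have := h c (Or.inl rfl)
          rwa [Function.update_self] at this
      · rintro ⟨h1, h2⟩ c' hc'
        rcases hc' with rfl | hc'
        · rwa [Function.update_self]
        · rw [Function.update_of_ne (by rintro rfl; exact hc hc')]; exact h1 c' hc'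
    have hupd : ∀ v : ℤ, (v = 1 ∨ v = -1) → ∀ j, Function.update ε c v j = 1 ∨ Function.update ε c v j = -1 := by
      intro v hv j
      rcases eq_or_ne j c with rfl | h
      · rw [Function.update_self]; exact hv
      · rw [Function.update_of_ne h]; exact hε j
    have hcard : (insert c S).card + n = t := by
      rw [Finset.card_insert_of_notMem hc]; omega
    have h1 := ih (insert c S) hcard (Function.update ε c 1) (hupd 1 (Or.inl rfl))
    have h2 := ih (insert c S) hcard (Function.update ε c (-1)) (hupd (-1) (Or.inr rfl))
    rw [key 1, Finset.card_insert_of_notMem hc] at h1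
    rw [key (-1), Finset.card_insert_of_notMem hc] at h2
    set F := Finset.univ.filter (fun i : Fin N => ∀ c' ∈ S, Y i c' = ε c') with hF
    have hsplit : F.card = (F.filter (fun i => Y i c = 1)).card + (F.filter (fun i => Y i c = -1)).card := by
      rw [← Finset.card_filter_add_card_filter_not (p := fun i => Y i c = 1)]
      congr 1
      apply congrArg
      apply Finset.filter_congr
      intro x _
      rcases hpm x c with h | h <;> simp [h]
    have hpow : (2:ℕ) ^ (S.card + 1) = 2 ^ S.card * 2 := by ring
    rw [hpow] at h1 h2
    have : F.card * 2 ^ S.card * 2 = N * 2 := by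
      rw [hsplit]; nlinarith [h1, h2]
    omega

lemma alt_sum (j : ℕ) (hj : 1 ≤ j) (t : ℕ) :
    ∑ s ∈ Finset.range (t+1), (-1:ℤ)^s * j.choose s = (-1)^t * (j-1).choose t := by
  obtain ⟨m, rfl⟩ : ∃ m, j = m + 1 := ⟨j - 1, by omega⟩
  induction t with
  | zero => simp
  | succ t ih =>
    rw [Finset.sum_range_succ, ih]
    have hp : (m+1).choose (t+1) = m.choose t + m.choose (t+1) := Nat.choose_succ_succ m t
    simp only [Nat.add_sub_cancel] at *
    rw [hp]
    push_cast
    ring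

lemma J_expand {N k : ℕ} (Y : Fin N → Fin k → ℤ) (hpm : isPM Y) (l : Finset (Fin k)) :
    Jchar Y l = ∑ S ∈ l.powerset, (-2:ℤ)^S.card *
      ((Finset.univ.filter (fun i : Fin N => ∀ c ∈ S, Y i c = -1)).card : ℤ) := by
  have step1 : ∀ i, ∏ c ∈ l, Y i c
      = ∑ S ∈ l.powerset, (-2:ℤ)^S.card * (if ∀ c ∈ S, Y i c = -1 then 1 else 0) := by
    intro i
    have h : ∏ c ∈ l, Y i c = ∏ c ∈ l, ((-2) * (if Y i c = -1 then (1:ℤ) else 0) + 1) := by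
      apply Finset.prod_congr rfl
      intro c _
      rcases hpm i c with h | h <;> simp [h]
    rw [h, Finset.prod_add]
    apply Finset.sum_congr rfl
    intro S hS
    rw [Finset.prod_const_one, mul_one, Finset.prod_mul_distrib, Finset.prod_const,
      Finset.prod_boole]
    congr 1
    simp
  unfold Jchar
  simp_rw [step1]
  rw [Finset.sum_comm]
  apply Finset.sum_congr rfl
  intro S _
  rw [← Finset.mul_sum, Finset.sum_boole]

lemma J_decomp {N k t lam : ℕ} (Y : Fin N → Fin k → ℤ) (hpm : isPM Y)
    (hoa : isOA2 N k t Y) (htk : t ≤ k) (hN : N = lam * 2 ^ t)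
    (l : Finset (Fin k)) (hl : t < l.card) :
    (2:ℤ)^(t+1) ∣ Jchar Y l - (-1)^t * lam * ((l.card - 1).choose t) * 2^t := by
  classical
  set cnt : Finset (Fin k) → ℤ :=
    fun S => ((Finset.univ.filter (fun i : Fin N => ∀ c ∈ S, Y i c = -1)).card : ℤ) with hcnt
  rw [J_expand Y hpm l]
  rw [← Finset.sum_filter_add_sum_filter_not l.powerset (fun S => S.card ≤ t)]
  have hmain : ∑ S ∈ l.powerset.filter (fun S => S.card ≤ t), (-2:ℤ)^S.card * cnt S
      = (-1)^t * lam * ((l.card-1).choose t) * 2^t := by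
    have hterm : ∀ S ∈ l.powerset.filter (fun S => S.card ≤ t),
        (-2:ℤ)^S.card * cnt S = (-1)^S.card * (lam * 2^t) := by
      intro S hS
      simp only [Finset.mem_filter, Finset.mem_powerset] at hS
      have hc := count_eq Y hpm hoa htk (t - S.card) S (by omega) (fun _ => -1)
        (fun _ => Or.inr rfl)
      have hc2 : (Finset.univ.filter (fun i : Fin N => ∀ c ∈ S, Y i c = -1)).card * 2 ^ S.card = N := hc
      have hc' : cnt S * 2^S.card = (N:ℤ) := by
        have h := congrArg (fun n : ℕ => (n:ℤ)) hc2
        push_cast at h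
        simpa [hcnt] using h
      calc (-2:ℤ)^S.card * cnt S = (-1)^S.card * (cnt S * 2^S.card) := by
            rw [neg_pow]; ring
        _ = (-1)^S.card * (lam * 2^t) := by rw [hc', hN]; push_cast; ring
    rw [Finset.sum_congr rfl hterm]
    -- group by cardinality
    rw [Finset.sum_filter, Finset.sum_powerset]
    have inner : ∀ s ∈ Finset.range (l.card + 1),
        (∑ S ∈ l.powersetCard s, if S.card ≤ t then ((-1:ℤ))^S.card * (lam * 2^t) else 0)
        = (if s ≤ t then ((-1:ℤ))^s * (lam * 2^t) else 0) * (l.card.choose s) := by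
      intro s hs
      rw [Finset.sum_congr rfl (fun S hS => by
        rw [(Finset.mem_powersetCard.mp hS).2]), Finset.sum_const,
        Finset.card_powersetCard, nsmul_eq_mul, mul_comm]
    rw [Finset.sum_congr rfl inner]
    simp_rw [ite_mul, zero_mul]
    rw [← Finset.sum_filter]
    have hrange : (Finset.range (l.card + 1)).filter (fun s => s ≤ t) = Finset.range (t+1) := by
      ext s
      simp only [Finset.mem_filter, Finset.mem_range]
      omega
    rw [hrange]
    have : ∀ s ∈ Finset.range (t+1),
        (-1:ℤ)^s * (lam * 2^t) * (l.card.choose s)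
        = (lam * 2^t) * ((-1:ℤ)^s * (l.card.choose s)) := fun s _ => by ring
    rw [Finset.sum_congr rfl this, ← Finset.mul_sum, alt_sum l.card (by omega) t]
    ring
  rw [hmain]
  have : (-1:ℤ)^t * lam * ((l.card-1).choose t) * 2^t
      + (∑ S ∈ l.powerset.filter (fun S => ¬ S.card ≤ t), (-2:ℤ)^S.card * cnt S)
      - (-1:ℤ)^t * lam * ((l.card-1).choose t) * 2^t
      = ∑ S ∈ l.powerset.filter (fun S => ¬ S.card ≤ t), (-2:ℤ)^S.card * cnt S := by ring
  rw [this]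
  apply Finset.dvd_sum
  intro S hS
  simp only [Finset.mem_filter, Finset.mem_powerset, not_le] at hS
  have h2 : (-2:ℤ)^S.card = (-2:ℤ)^(t+1) * (-2:ℤ)^(S.card - (t+1)) := by
    rw [← pow_add]
    congr 1
    omega
  rw [h2]
  have h3 : (2:ℤ)^(t+1) ∣ (-2:ℤ)^(t+1) := by
    rw [neg_pow]
    exact Dvd.intro_left _ rfl
  exact dvd_mul_of_dvd_left (dvd_mul_of_dvd_left h3 _) _

lemma Jsq_decomp {N k t lam r : ℕ} (Y : Fin N → Fin k → ℤ) (hpm : isPM Y)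
    (hoa : isOA2 N k t Y) (htk : t ≤ k) (hN : N = lam * 2 ^ t) (hlam : Odd lam)
    (hr : 1 ≤ r) (l : Finset (Fin k)) (hl : l.card = t + r) :
    ((phi2 t (t+r) : ℤ)) ∣ (Jchar Y l)^2 - (Ioa t (t+r)) * 2^(2*t) := by
  have hC : (t + r - 1).choose (t + r - t - 1) = (t + r - 1).choose t := by
    have h1 : t + r - t - 1 = r - 1 := by omega
    have h2 : r - 1 = (t + r - 1) - t := by omega
    rw [h1, h2, Nat.choose_symm (by omega)]
  obtain ⟨m, hm⟩ := J_decomp Y hpm hoa htk hN l (by omega)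
  rw [hl] at hm
  have hJ : Jchar Y l = 2^t * ((-1)^t * lam * ((t + r - 1).choose t) + 2 * m) := by
    rw [mul_add]
    rw [sub_eq_iff_eq_add] at hm
    rw [hm]
    ring
  rcases Nat.even_or_odd ((t + r - 1).choose t) with hE | hO
  · -- even case: Ioa = 0
    have hI : Ioa t (t+r) = 0 := by
      unfold Ioa
      rw [hC, if_neg (Nat.not_odd_iff_even.mpr hE)]
    rw [hI]
    unfold phi2
    rw [hI]
    have hu : Even ((-1:ℤ)^t * lam * ((t + r - 1).choose t) + 2 * m) := by
      have : Even (((t + r - 1).choose t : ℤ)) := by exact_mod_cast hE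
      exact (Even.mul_left this _).add (even_two_mul m)
    obtain ⟨v, hv⟩ := hu
    refine ⟨v^2, ?_⟩
    rw [hJ, mul_pow, hv]
    push_cast
    ring
  · -- odd case: Ioa = 1
    have hI : Ioa t (t+r) = 1 := by
      unfold Ioa
      rw [hC, if_pos hO]
    rw [hI]
    unfold phi2
    rw [hI]
    have hu : Odd ((-1:ℤ)^t * lam * ((t + r - 1).choose t) + 2 * m) := by
      have h1 : Odd ((-1:ℤ)^t) := Odd.pow (by norm_num)
      have h2 : Odd ((lam:ℤ)) := by exact_mod_cast hlam
      have h3 : Odd (((t + r - 1).choose t : ℤ)) := by exact_mod_cast hO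
      exact ((h1.mul h2).mul h3).add_even (even_two_mul m)
    obtain ⟨n, hn⟩ := hu
    have h8 : ∃ p : ℤ, ((-1:ℤ)^t * lam * ((t + r - 1).choose t) + 2 * m)^2 = 8 * p + 1 := by
      obtain ⟨p, hp⟩ := Int.even_mul_succ_self n
      exact ⟨p, by rw [hn]; nlinarith [hp]⟩
    obtain ⟨p, hp⟩ := h8
    refine ⟨p, ?_⟩
    rw [hJ, mul_pow, hp]
    push_cast
    ring

lemma A_decomp {N k t lam r : ℕ} (Y : Fin N → Fin k → ℤ) (hpm : isPM Y)
    (hoa : isOA2 N k t Y) (htk : t ≤ k) (hN : N = lam * 2 ^ t) (hlam : Odd lam)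
    (hr : 1 ≤ r) (hk1 : 1 ≤ k) (i : Fin k) :
    ∃ M : ℤ, (∑ l ∈ Finset.univ.filter (fun l : Finset (Fin k) => l.card = t + r ∧ i ∉ l),
        (Jchar Y l)^2)
      = (phi1 (k-1) t (t+r) : ℤ) + (phi2 t (t+r) : ℤ) * M := by
  classical
  set F := Finset.univ.filter (fun l : Finset (Fin k) => l.card = t + r ∧ i ∉ l) with hF
  have hcard : F.card = (k-1).choose (t+r) := by
    have hFeq : F = (Finset.univ.erase i).powersetCard (t+r) := by
      ext l
      simp only [hF, Finset.mem_filter, Finset.mem_univ, true_and, Finset.mem_powersetCard,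
        Finset.subset_erase, Finset.subset_univ, true_and]
      tauto
    rw [hFeq, Finset.card_powersetCard, Finset.card_erase_of_mem (Finset.mem_univ i),
      Finset.card_univ, Fintype.card_fin]
  have hdvd : ((phi2 t (t+r) : ℤ)) ∣ ∑ l ∈ F, ((Jchar Y l)^2 - (Ioa t (t+r)) * 2^(2*t)) := by
    apply Finset.dvd_sum
    intro l hl
    simp only [hF, Finset.mem_filter] at hl
    exact Jsq_decomp Y hpm hoa htk hN hlam hr l hl.2.1
  obtain ⟨M, hM⟩ := hdvd
  refine ⟨M, ?_⟩
  rw [Finset.sum_sub_distrib, Finset.sum_const, hcard, nsmul_eq_mul,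
    sub_eq_iff_eq_add] at hM
  rw [hM]
  unfold phi1
  push_cast
  ring

theorem stmt8 (N k t lam r : ℕ) (Y : Fin N → Fin k → ℤ)
    (hpm : isPM Y) (hoa : isOA2 N k t Y)
    (ht1 : 1 ≤ t) (htk : t ≤ k) (hN : N = lam * 2 ^ t) (hlam : Odd lam)
    (hk : t + 3 ≤ k) (hr : 1 ≤ r) (hrk : t + r ≤ k - 1)
    (i : Fin k)
    (hmin : ∀ j' : Fin k,
      (∑ l ∈ Finset.univ.filter (fun l : Finset (Fin k) => l.card = t + r ∧ i ∉ l),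
          (Jchar Y l) ^ 2) ≤
        ∑ l ∈ Finset.univ.filter (fun l : Finset (Fin k) => l.card = t + r ∧ j' ∉ l),
          (Jchar Y l) ^ 2) :
    (∑ l ∈ Finset.univ.filter (fun l : Finset (Fin k) => l.card = t + r ∧ i ∉ l),
        (Jchar Y l) ^ 2) ≤
      (phi2 t (t + r) : ℤ) *
          ⌊((((k : ℚ) - t - r) / k) *
                ((∑ l ∈ Finset.univ.filter (fun l : Finset (Fin k) => l.card = t + r),
                  (Jchar Y l) ^ 2 : ℤ) : ℚ) -
              (phi1 (k - 1) t (t + r) : ℚ)) / (phi2 t (t + r) : ℚ)⌋ +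
        (phi1 (k - 1) t (t + r) : ℤ) := by
  classical
  set A : ℤ := ∑ l ∈ Finset.univ.filter (fun l : Finset (Fin k) => l.card = t + r ∧ i ∉ l),
      (Jchar Y l) ^ 2 with hA
  set Stot : ℤ := ∑ l ∈ Finset.univ.filter (fun l : Finset (Fin k) => l.card = t + r),
      (Jchar Y l) ^ 2 with hStot
  -- double counting
  have hswap : ∑ j' : Fin k,
      (∑ l ∈ Finset.univ.filter (fun l : Finset (Fin k) => l.card = t + r ∧ j' ∉ l),
        (Jchar Y l)^2) = ((k - (t+r) : ℕ) : ℤ) * Stot := by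
    have h1 : ∀ j' : Fin k,
        Finset.univ.filter (fun l : Finset (Fin k) => l.card = t + r ∧ j' ∉ l)
        = (Finset.univ.filter (fun l : Finset (Fin k) => l.card = t + r)).filter
            (fun l => j' ∉ l) := by
      intro j'; rw [Finset.filter_filter]
    calc ∑ j' : Fin k,
        (∑ l ∈ Finset.univ.filter (fun l : Finset (Fin k) => l.card = t + r ∧ j' ∉ l),
          (Jchar Y l)^2)
        = ∑ j' : Fin k, ∑ l ∈ Finset.univ.filter (fun l : Finset (Fin k) => l.card = t + r),
            (if j' ∉ l then (Jchar Y l)^2 else 0) := by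
          exact Finset.sum_congr rfl (fun j' _ => by rw [h1, Finset.sum_filter])
      _ = ∑ l ∈ Finset.univ.filter (fun l : Finset (Fin k) => l.card = t + r),
            ∑ j' : Fin k, (if j' ∉ l then (Jchar Y l)^2 else 0) := Finset.sum_comm
      _ = ∑ l ∈ Finset.univ.filter (fun l : Finset (Fin k) => l.card = t + r),
            ((k - (t+r) : ℕ) : ℤ) * (Jchar Y l)^2 := by
          apply Finset.sum_congr rfl
          intro l hl
          simp only [Finset.mem_filter] at hl
          rw [← Finset.sum_filter, Finset.sum_const]
          have h2 : Finset.univ.filter (fun j' : Fin k => j' ∉ l) = lᶜ := by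
            ext x; simp
          rw [h2, Finset.card_compl, hl.2, Fintype.card_fin, nsmul_eq_mul]
      _ = ((k - (t+r) : ℕ) : ℤ) * Stot := by rw [hStot, Finset.mul_sum]
  have hdc : (k:ℤ) * A ≤ ((k - (t+r) : ℕ) : ℤ) * Stot := by
    rw [← hswap]
    calc (k:ℤ) * A = ∑ _j' : Fin k, A := by
          rw [Finset.sum_const, Finset.card_univ, Fintype.card_fin, nsmul_eq_mul]
      _ ≤ _ := Finset.sum_le_sum (fun j' _ => hmin j')
  obtain ⟨M, hM⟩ := A_decomp Y hpm hoa htk hN hlam hr (by omega) i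
  rw [← hA] at hM
  have hp2 : (0:ℤ) < (phi2 t (t+r) : ℤ) := by
    have : 0 < phi2 t (t+r) := by unfold phi2; exact Nat.pow_pos (by norm_num)
    exact_mod_cast this
  have hp2q : (0:ℚ) < (phi2 t (t+r) : ℚ) := by exact_mod_cast hp2
  have hkq : (0:ℚ) < (k:ℚ) := by
    have : 0 < k := by omega
    exact_mod_cast this
  have hAX : ((A:ℚ)) ≤ (((k : ℚ) - t - r) / k) * ((Stot : ℤ) : ℚ) := by
    have hcast : ((k:ℚ) - t - r) = ((k - (t+r) : ℕ) : ℚ) := by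
      have : t + r ≤ k := by omega
      push_cast [Nat.cast_sub this]
      ring
    rw [hcast, div_mul_eq_mul_div, le_div_iff₀ hkq]
    have := hdc
    have h3 : ((k:ℚ)) * (A:ℚ) ≤ ((k - (t+r) : ℕ) : ℚ) * ((Stot:ℤ):ℚ) := by
      exact_mod_cast this
    linarith
  have hfloor : M ≤ ⌊((((k : ℚ) - t - r) / k) * ((Stot : ℤ) : ℚ)
      - (phi1 (k - 1) t (t + r) : ℚ)) / (phi2 t (t + r) : ℚ)⌋ := by
    rw [Int.le_floor, le_div_iff₀ hp2q]
    have hMq : (A:ℚ) = (phi1 (k-1) t (t+r) : ℚ) + (phi2 t (t+r) : ℚ) * (M:ℚ) := by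
      exact_mod_cast congrArg (fun z : ℤ => (z:ℚ)) hM
    linarith
  have hmul := mul_le_mul_of_nonneg_left hfloor (le_of_lt hp2)
  rw [hM]
  linarith
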